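/- Hypergeometric representation of the coefficients C_k. Assume (f_j)_i ≠ 0 for all 1 ≤ j ≤ r and 0 ≤ i ≤ m. Then for every 0 ≤ k ≤ m, C_k = ((−1)^k / k!) · Σ_{i=0}^{k} (−k)_i Π_{j=1}^{r} (f_j + m_j)_i / ( i! Π_{j=1}^{r} (f_j)_i ). -/

import Mathlib

/-- Pochhammer symbol `(a)ₖ = a(a+1)⋯(a+k−1)` for complex `a`. -/
noncomputable def poch (a : ℂ) (k : ℕ) : ℂ := ∏ i ∈ Finset.range k, (a + i)

/-- Stirling numbers of the second kind `S(n, k)`. -/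
def stirling2 : ℕ → ℕ → ℕ
  | 0, 0 => 1
  | 0, _ + 1 => 0
  | _ + 1, 0 => 0
  | n + 1, k + 1 => (k + 1) * stirling2 n (k + 1) + stirling2 n k

open Finset

lemma pascal_sum (j k : ℕ) :
    ∑ i ∈ Finset.range (k+2), (-1:ℂ)^i * ((k+1).choose i) * (i:ℂ)^j
      = ∑ i ∈ Finset.range (k+1), (-1:ℂ)^i * (k.choose i) * (i:ℂ)^j
        - ∑ i ∈ Finset.range (k+1), (-1:ℂ)^i * (k.choose i) * ((i:ℂ)+1)^j := by
  rw [Finset.sum_range_succ' (fun i => (-1:ℂ)^i * ((k+1).choose i) * (i:ℂ)^j) (k+1)]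
  have h2 : ∑ i ∈ Finset.range (k+2), (-1:ℂ)^i * (k.choose i) * (i:ℂ)^j
      = ∑ i ∈ Finset.range (k+1), (-1:ℂ)^i * (k.choose i) * (i:ℂ)^j := by
    rw [Finset.sum_range_succ]
    simp [Nat.choose_succ_self]
  have key : ∀ i ∈ Finset.range (k+1),
      (-1:ℂ)^(i+1) * (((k+1).choose (i+1) : ℕ) : ℂ) * (((i+1 : ℕ)):ℂ)^j
      = -((-1:ℂ)^i * (k.choose i) * ((i:ℂ)+1)^j)
        + (-1:ℂ)^(i+1) * (k.choose (i+1)) * (((i+1 : ℕ)):ℂ)^j := by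
    intro i _
    rw [Nat.choose_succ_succ]
    push_cast
    ring
  rw [Finset.sum_congr rfl key, Finset.sum_add_distrib]
  have h4 : (∑ i ∈ Finset.range (k+1),
        (-1:ℂ)^(i+1) * (k.choose (i+1)) * (((i+1 : ℕ)):ℂ)^j)
      + (-1:ℂ)^0 * ((k.choose 0 : ℕ) : ℂ) * (((0:ℕ)):ℂ)^j
      = ∑ i ∈ Finset.range (k+2), (-1:ℂ)^i * (k.choose i) * (i:ℂ)^j :=
    (Finset.sum_range_succ' (fun i => (-1:ℂ)^i * (k.choose i) * (i:ℂ)^j) (k+1)).symm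
  have hneg : ∑ i ∈ Finset.range (k+1),
      -((-1:ℂ)^i * (k.choose i) * ((i:ℂ)+1)^j)
      = -∑ i ∈ Finset.range (k+1), (-1:ℂ)^i * (k.choose i) * ((i:ℂ)+1)^j := by
    rw [Finset.sum_neg_distrib]
  have hT : ((-1:ℂ)^0 * (((k+1).choose 0 : ℕ) : ℂ) * (((0:ℕ)):ℂ)^j)
      = (-1:ℂ)^0 * ((k.choose 0 : ℕ) : ℂ) * (((0:ℕ)):ℂ)^j := by norm_num
  rw [hneg]
  linear_combination h4 + h2 + hT

lemma stirling2_formula (j k : ℕ) :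
    ((-1:ℂ))^k * (k.factorial : ℂ) * (stirling2 j k : ℂ)
      = ∑ i ∈ Finset.range (k+1), (-1:ℂ)^i * (k.choose i : ℂ) * (i:ℂ)^j := by
  induction j generalizing k with
  | zero =>
    cases k with
    | zero => simp [stirling2]
    | succ k =>
      have h : ((∑ i ∈ range (k+2), (-1:ℤ)^i * ((k+1).choose i) : ℤ) : ℂ) = 0 := by
        rw [Int.alternating_sum_range_choose]; simp
      push_cast at h
      simp only [stirling2, Nat.cast_zero, mul_zero, pow_zero, mul_one]
      rw [← h]
  | succ j ih =>
    cases k with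
    | zero => simp [stirling2]
    | succ k =>
      have hs : (stirling2 (j+1) (k+1) : ℂ)
          = ((k:ℂ)+1) * (stirling2 j (k+1) : ℂ) + (stirling2 j k : ℂ) := by
        rw [show stirling2 (j+1) (k+1) = (k+1) * stirling2 j (k+1) + stirling2 j k from rfl]
        push_cast; ring
      have hfac : ((k+1).factorial : ℂ) = ((k:ℂ)+1) * (k.factorial : ℂ) := by
        rw [Nat.factorial_succ]; push_cast; ring
      have lhs_eq : ((-1:ℂ))^(k+1) * ((k+1).factorial : ℂ) * (stirling2 (j+1) (k+1) : ℂ)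
          = ((k:ℂ)+1) * (((-1:ℂ))^(k+1) * ((k+1).factorial : ℂ) * (stirling2 j (k+1) : ℂ))
            - ((k:ℂ)+1) * (((-1:ℂ))^k * (k.factorial : ℂ) * (stirling2 j k : ℂ)) := by
        rw [hs, hfac]; ring
      rw [lhs_eq, ih (k+1), ih k]
      have hr : ∑ i ∈ Finset.range (k+2), (-1:ℂ)^i * ((k+1).choose i) * (i:ℂ)^(j+1)
          = -((k:ℂ)+1) * ∑ i ∈ Finset.range (k+1), (-1:ℂ)^i * (k.choose i) * ((i:ℂ)+1)^j := by
        rw [Finset.sum_range_succ' (fun i => (-1:ℂ)^i * ((k+1).choose i) * (i:ℂ)^(j+1)) (k+1)]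
        have key : ∀ i ∈ Finset.range (k+1),
            (-1:ℂ)^(i+1) * (((k+1).choose (i+1) : ℕ) : ℂ) * (((i+1 : ℕ)):ℂ)^(j+1)
            = -((k:ℂ)+1) * ((-1:ℂ)^i * (k.choose i) * ((i:ℂ)+1)^j) := by
          intro i _
          have hc : ((k:ℂ) + 1) * (k.choose i : ℂ) = ((k+1).choose (i+1) : ℂ) * ((i:ℂ)+1) := by
            exact_mod_cast congrArg (Nat.cast : ℕ → ℂ) (Nat.add_one_mul_choose_eq k i)
          push_cast
          linear_combination (-((-1:ℂ)^(i+1) * ((i:ℂ)+1)^j)) * hc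
        rw [Finset.sum_congr rfl key, ← Finset.mul_sum]
        simp
      rw [hr, pascal_sum j k]
      ring

lemma stirling2_zero_of_lt : ∀ j k : ℕ, j < k → stirling2 j k = 0 := by
  intro j
  induction j with
  | zero => intro k hk; cases k with
    | zero => omega
    | succ k => rfl
  | succ j ih =>
    intro k hk
    cases k with
    | zero => omega
    | succ k =>
      show (k + 1) * stirling2 j (k + 1) + stirling2 j k = 0
      rw [ih (k+1) (by omega), ih k (by omega)]
      ring

lemma poch_add (a : ℂ) (n i : ℕ) : poch a (n + i) = poch a n * poch (a + (n:ℂ)) i := by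
  unfold poch
  rw [Finset.prod_range_add]
  congr 1
  apply Finset.prod_congr rfl
  intro x _
  push_cast
  ring

lemma poch_neg_nat (k : ℕ) : ∀ i : ℕ, i ≤ k →
    poch (-(k:ℂ)) i = (-1:ℂ)^i * (k.choose i) * (i.factorial) := by
  intro i
  induction i with
  | zero => intro _; simp [poch]
  | succ i ih =>
    intro h
    have hik : i ≤ k := by omega
    have hstep : poch (-(k:ℂ)) (i+1) = poch (-(k:ℂ)) i * (-(k:ℂ) + i) :=
      Finset.prod_range_succ _ i
    rw [hstep, ih hik]
    have hc : ((k.choose (i+1) : ℕ):ℂ) * ((i:ℂ)+1) = (k.choose i : ℂ) * ((k:ℂ) - i) := by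
      have h0 := congrArg (Nat.cast : ℕ → ℂ) (Nat.choose_succ_right_eq k i)
      push_cast [Nat.cast_sub hik] at h0
      linear_combination h0
    rw [Nat.factorial_succ]
    push_cast
    linear_combination ((-1:ℂ)^i * (i.factorial : ℂ)) * hc

/-- **Hypergeometric representation of the coefficients `Cₖ`.** -/
theorem coeff_C_hypergeometric_representation
    (r : ℕ) (hr : 0 < r) (mv : Fin r → ℕ) (hmv : ∀ j, 0 < mv j)
    (f : Fin r → ℂ) (m : ℕ) (hm : m = ∑ j, mv j)
    (Λ : ℂ) (hΛdef : Λ = ∏ j, poch (f j) (mv j)) (hΛ : Λ ≠ 0)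
    (σc : ℕ → ℂ)
    (hσ : ∀ x : ℂ, ∏ j, poch (f j + x) (mv j) = ∑ j ∈ Finset.range (m + 1), σc j * x ^ j)
    (C : ℕ → ℂ)
    (hC : ∀ k, k ≤ m → C k = Λ⁻¹ * ∑ j ∈ Finset.Icc k m, σc j * (stirling2 j k : ℂ))
    (hf : ∀ j, ∀ i, i ≤ m → poch (f j) i ≠ 0) :
    ∀ k, k ≤ m →
      C k = (-1) ^ k / (Nat.factorial k : ℂ) *
        ∑ i ∈ Finset.range (k + 1),
          poch (-(k : ℂ)) i * (∏ j, poch (f j + mv j) i) /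
            ((Nat.factorial i : ℂ) * ∏ j, poch (f j) i) := by
  intro k hk
  have hkfac : ((k.factorial : ℕ) : ℂ) ≠ 0 := Nat.cast_ne_zero.mpr k.factorial_ne_zero
  -- Step 1: extend the sum from Icc k m to range (m+1)
  have h1 : C k = Λ⁻¹ * ∑ j ∈ Finset.range (m+1), σc j * (stirling2 j k : ℂ) := by
    rw [hC k hk]
    congr 1
    apply Finset.sum_subset
    · intro x hx
      rw [Finset.mem_Icc] at hx
      exact Finset.mem_range.mpr (Nat.lt_succ_of_le hx.2)
    · intro x hx hnx
      rw [Finset.mem_range] at hx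
      rw [Finset.mem_Icc] at hnx
      push_neg at hnx
      have hxk : x < k := by by_contra hh; push_neg at hh; omega
      rw [stirling2_zero_of_lt x k hxk]
      simp
  -- Stirling number expansion
  have hS : ∀ jj : ℕ, (stirling2 jj k : ℂ)
      = (-1:ℂ)^k / (k.factorial : ℂ)
        * ∑ i ∈ Finset.range (k+1), (-1:ℂ)^i * (k.choose i : ℂ) * (i:ℂ)^jj := by
    intro jj
    rw [← stirling2_formula jj k]
    have hsgn : ((-1:ℂ))^k * ((-1:ℂ))^k = 1 := by
      rw [← pow_add]
      exact Even.neg_one_pow ⟨k, rfl⟩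
    field_simp
    linear_combination (-(stirling2 jj k : ℂ)) * hsgn
  -- Step 2: swap summations
  have h2 : ∑ j ∈ Finset.range (m+1), σc j * (stirling2 j k : ℂ)
      = (-1:ℂ)^k / (k.factorial : ℂ)
        * ∑ i ∈ Finset.range (k+1),
            (-1:ℂ)^i * (k.choose i : ℂ) * (∏ j, poch (f j + i) (mv j)) := by
    calc ∑ jj ∈ Finset.range (m+1), σc jj * (stirling2 jj k : ℂ)
        = ∑ jj ∈ Finset.range (m+1), ∑ i ∈ Finset.range (k+1),
            (-1:ℂ)^k / (k.factorial : ℂ)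
              * ((-1:ℂ)^i * (k.choose i : ℂ) * (σc jj * (i:ℂ)^jj)) := by
          apply Finset.sum_congr rfl
          intro jj _
          rw [hS jj]
          simp only [Finset.mul_sum]
          apply Finset.sum_congr rfl
          intro i _
          ring
      _ = ∑ i ∈ Finset.range (k+1), ∑ jj ∈ Finset.range (m+1),
            (-1:ℂ)^k / (k.factorial : ℂ)
              * ((-1:ℂ)^i * (k.choose i : ℂ) * (σc jj * (i:ℂ)^jj)) := Finset.sum_comm
      _ = ∑ i ∈ Finset.range (k+1),
            (-1:ℂ)^k / (k.factorial : ℂ)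
              * ((-1:ℂ)^i * (k.choose i : ℂ) * (∏ j, poch (f j + i) (mv j))) := by
          apply Finset.sum_congr rfl
          intro i _
          rw [← Finset.mul_sum, ← Finset.mul_sum, ← hσ (i:ℂ)]
      _ = _ := by rw [Finset.mul_sum]
  -- per-term identity for the RHS
  have term_eq : ∀ i ∈ Finset.range (k+1),
      poch (-(k : ℂ)) i * (∏ j, poch (f j + mv j) i) /
          ((Nat.factorial i : ℂ) * ∏ j, poch (f j) i)
        = Λ⁻¹ * ((-1:ℂ)^i * (k.choose i : ℂ) * (∏ j, poch (f j + i) (mv j))) := by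
    intro i hi
    rw [Finset.mem_range] at hi
    have hik : i ≤ k := by omega
    have him : i ≤ m := le_trans hik hk
    have hQR : (∏ j, poch (f j + mv j) i) * Λ
        = (∏ j, poch (f j + i) (mv j)) * (∏ j, poch (f j) i) := by
      rw [hΛdef, ← Finset.prod_mul_distrib, ← Finset.prod_mul_distrib]
      apply Finset.prod_congr rfl
      intro j _
      have e1 := poch_add (f j) (mv j) i
      have e2 := poch_add (f j) i (mv j)
      rw [Nat.add_comm (mv j) i] at e1
      rw [e2] at e1
      linear_combination -e1
    have hR : (∏ j, poch (f j) i) ≠ 0 :=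
      Finset.prod_ne_zero_iff.mpr fun j _ => hf j i him
    have hifac : ((i.factorial : ℕ) : ℂ) ≠ 0 := Nat.cast_ne_zero.mpr i.factorial_ne_zero
    rw [poch_neg_nat k i hik]
    field_simp
    linear_combination (k.choose i : ℂ) * hQR
  rw [h1, h2, Finset.sum_congr rfl term_eq]
  rw [← Finset.mul_sum]
  ring
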